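/- The Jacobian determinant of the map φ(U,V,W) = (W + (W+1)U/V, W·V/U + W + 1, U(V-1)/(U+V)) equals -(UW + U + VW)/(UV). -/

import Mathlib

open Matrix

/-- The Jacobian determinant of the Inverse-Beta stationarity-reversibility map
`φ(U,V,W) = (W + (W+1)U/V, W·V/U + W + 1, U(V-1)/(U+V))`
equals `-(UW + U + VW)/(UV)` for `U > 0`, `V > 1`, `W > 0`. -/
theorem phiIB_jacobian (U V W : ℝ) (hU : 0 < U) (hV : 1 < V) (hW : 0 < W) :
    Matrix.det
      !![deriv (fun x => W + (W + 1) * x / V) U,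
         deriv (fun y => W + (W + 1) * U / y) V,
         deriv (fun z => z + (z + 1) * U / V) W;
         deriv (fun x => W * V / x + W + 1) U,
         deriv (fun y => W * y / U + W + 1) V,
         deriv (fun z => z * V / U + z + 1) W;
         deriv (fun x => x * (V - 1) / (x + V)) U,
         deriv (fun y => U * (y - 1) / (U + y)) V,
         deriv (fun z => U * (V - 1) / (U + V)) W]
      = -((U * W + U + V * W) / (U * V)) := by
  have hU0 : U ≠ 0 := ne_of_gt hU
  have hV0 : V ≠ 0 := ne_of_gt (lt_trans one_pos hV)
  have hUV : U + V ≠ 0 := ne_of_gt (by linarith)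
  have h11 : deriv (fun x => W + (W + 1) * x / V) U = (W + 1) / V := by
    have : HasDerivAt (fun x : ℝ => W + (W + 1) * x / V) ((W + 1) / V) U := by
      have := ((hasDerivAt_id U).const_mul (W + 1)).div_const V
      simpa [mul_comm] using this.const_add W
    exact this.deriv
  have h12 : deriv (fun y => W + (W + 1) * U / y) V = -((W + 1) * U / V ^ 2) := by
    have : HasDerivAt (fun y : ℝ => W + (W + 1) * U / y) (-((W + 1) * U / V ^ 2)) V := by
      have := (hasDerivAt_inv hV0).const_mul ((W + 1) * U)
      simpa [div_eq_mul_inv] using this.const_add W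
    exact this.deriv
  have h13 : deriv (fun z => z + (z + 1) * U / V) W = 1 + U / V := by
    have : HasDerivAt (fun z : ℝ => z + (z + 1) * U / V) (1 + U / V) W := by
      have h := (((hasDerivAt_id W).add_const 1).mul_const U).div_const V
      simpa using (hasDerivAt_id W).fun_add h
    exact this.deriv
  have h21 : deriv (fun x => W * V / x + W + 1) U = -(W * V / U ^ 2) := by
    have : HasDerivAt (fun x : ℝ => W * V / x + W + 1) (-(W * V / U ^ 2)) U := by
      have := (hasDerivAt_inv hU0).const_mul (W * V)
      simpa [div_eq_mul_inv] using (this.add_const W).add_const 1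
    exact this.deriv
  have h22 : deriv (fun y => W * y / U + W + 1) V = W / U := by
    have : HasDerivAt (fun y : ℝ => W * y / U + W + 1) (W / U) V := by
      have := ((hasDerivAt_id V).const_mul W).div_const U
      simpa [mul_comm] using (this.add_const W).add_const 1
    exact this.deriv
  have h23 : deriv (fun z => z * V / U + z + 1) W = V / U + 1 := by
    have : HasDerivAt (fun z : ℝ => z * V / U + z + 1) (V / U + 1) W := by
      have h := ((hasDerivAt_id W).mul_const V).div_const U
      simpa using ((h.add (hasDerivAt_id W)).add_const 1)
    exact this.deriv
  have h31 : deriv (fun x => x * (V - 1) / (x + V)) U = (V - 1) * V / (U + V) ^ 2 := by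
    have : HasDerivAt (fun x : ℝ => x * (V - 1) / (x + V)) ((V - 1) * V / (U + V) ^ 2) U := by
      have hn : HasDerivAt (fun x : ℝ => x * (V - 1)) (V - 1) U := by
        simpa using (hasDerivAt_id U).mul_const (V - 1)
      have hd : HasDerivAt (fun x : ℝ => x + V) 1 U := by
        simpa using (hasDerivAt_id U).add_const V
      have := hn.fun_div hd hUV
      convert this using 1
      · rfl
      · rfl
      ring
    exact this.deriv
  have h32 : deriv (fun y => U * (y - 1) / (U + y)) V = U * (U + 1) / (U + V) ^ 2 := by
    have : HasDerivAt (fun y : ℝ => U * (y - 1) / (U + y)) (U * (U + 1) / (U + V) ^ 2) V := by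
      have hn : HasDerivAt (fun y : ℝ => U * (y - 1)) U V := by
        simpa using ((hasDerivAt_id V).sub_const 1).const_mul U
      have hd : HasDerivAt (fun y : ℝ => U + y) 1 V := by
        simpa using (hasDerivAt_id V).const_add U
      have := hn.fun_div hd hUV
      convert this using 1
      · rfl
      · rfl
      ring
    exact this.deriv
  have h33 : deriv (fun _ : ℝ => U * (V - 1) / (U + V)) W = 0 := deriv_const _ _
  rw [Matrix.det_fin_three]
  rw [h11, h12, h13, h21, h22, h23, h31, h32, h33]
  simp only [Matrix.of_apply, Matrix.cons_val', Matrix.cons_val_zero, Matrix.cons_val_one, Matrix.cons_val_two, Matrix.empty_val', Matrix.cons_val_fin_one, Matrix.tail_cons, Matrix.vecHead]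
  field_simp
  ring
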